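/- If A is a finite nonempty set of integers and A ⊕ C = ℤ is a tiling (every integer has a unique representation a + c with a ∈ A, c ∈ C), then C is periodic: there exists n ≥ 1 and a finite set B such that C = B ⊕ nℤ and n = (#A)(#B). -/

import Mathlib

/-- `A ⊕ C = ℤ`: every integer has a unique representation `a + c` with
`a ∈ A`, `c ∈ C`. -/
def IsTiling (A : Set ℤ) (C : Set ℤ) : Prop :=
  ∀ z : ℤ, ∃! p : ℤ × ℤ, p.1 ∈ A ∧ p.2 ∈ C ∧ p.1 + p.2 = z

section Aux

variable {A : Finset ℤ} {C : Set ℤ}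

/-- Forward determination: membership of `t + E` in `C` is determined by the
window `C ∩ [t, t+E)`. Here `E = max A - min A + 1`. -/
lemma tiling_fwd (hA : A.Nonempty) (h : IsTiling (↑A) C) (t : ℤ) :
    (t + (A.max' hA - A.min' hA + 1) ∈ C) ↔
      ¬ ∃ a ∈ A, ∃ j : ℤ, 0 ≤ j ∧ j < (A.max' hA - A.min' hA + 1) ∧ t + j ∈ C ∧
        a + j = (A.max' hA - A.min' hA + 1) + A.min' hA := by
  set m := A.min' hA with hm
  set M := A.max' hA with hM
  set E := M - m + 1 with hE
  obtain ⟨⟨a₀, c₀⟩, ⟨ha₀, hc₀, hsum⟩, huniq⟩ := h (t + E + m)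
  constructor
  · intro hTE ⟨a, ha, j, hj0, hjE, hjC, haj⟩
    have h1 : ((m, t + E) : ℤ × ℤ) = (a₀, c₀) :=
      huniq (m, t + E) ⟨A.min'_mem hA, hTE, by ring⟩
    have h2 : ((a, t + j) : ℤ × ℤ) = (a₀, c₀) :=
      huniq (a, t + j) ⟨ha, hjC, by show a + (t + j) = _; omega⟩
    have heq2 : t + E = t + j := congrArg Prod.snd (h1.trans h2.symm)
    omega
  · intro hno
    have hma : m ≤ a₀ := A.min'_le _ ha₀
    have haM : a₀ ≤ M := A.le_max' _ ha₀
    by_cases hc : c₀ = t + E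
    · rwa [← hc]
    · exfalso
      apply hno
      refine ⟨a₀, ha₀, c₀ - t, by omega, by omega, by simpa using hc₀, by omega⟩

/-- Backward determination: membership of `t - 1` in `C` is determined by the
window `C ∩ [t, t+E)`. -/
lemma tiling_bwd (hA : A.Nonempty) (h : IsTiling (↑A) C) (t : ℤ) :
    (t - 1 ∈ C) ↔
      ¬ ∃ a ∈ A, ∃ j : ℤ, 0 ≤ j ∧ j < (A.max' hA - A.min' hA + 1) ∧ t + j ∈ C ∧
        a + j = A.max' hA - 1 := by
  set m := A.min' hA with hm
  set M := A.max' hA with hM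
  set E := M - m + 1 with hE
  obtain ⟨⟨a₀, c₀⟩, ⟨ha₀, hc₀, hsum⟩, huniq⟩ := h (t - 1 + M)
  constructor
  · intro hT ⟨a, ha, j, hj0, hjE, hjC, haj⟩
    have h1 : ((M, t - 1) : ℤ × ℤ) = (a₀, c₀) :=
      huniq (M, t - 1) ⟨A.max'_mem hA, hT, by ring⟩
    have h2 : ((a, t + j) : ℤ × ℤ) = (a₀, c₀) :=
      huniq (a, t + j) ⟨ha, hjC, by show a + (t + j) = _; omega⟩
    have heq2 : t - 1 = t + j := congrArg Prod.snd (h1.trans h2.symm)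
    omega
  · intro hno
    have hma : m ≤ a₀ := A.min'_le _ ha₀
    have haM : a₀ ≤ M := A.le_max' _ ha₀
    by_cases hc : c₀ = t - 1
    · rwa [← hc]
    · exfalso
      apply hno
      refine ⟨a₀, ha₀, c₀ - t, by omega, by omega, by simpa using hc₀, by omega⟩

end Aux

theorem tiling_periodic (A : Finset ℤ) (hA : A.Nonempty) (C : Set ℤ)
    (h : IsTiling (↑A) C) :
    ∃ n : ℕ, 1 ≤ n ∧ ∃ B : Finset ℤ,
      (C = {c : ℤ | ∃ b ∈ B, ∃ z : ℤ, c = b + (n : ℤ) * z}) ∧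
      n = A.card * B.card := by
  classical
  set m := A.min' hA with hm
  set M := A.max' hA with hM
  set E := M - m + 1 with hE
  have hE1 : 1 ≤ E := by
    have : m ≤ M := A.min'_le _ (A.max'_mem hA)
    omega
  -- pigeonhole on windows
  set f : ℤ → Finset ℤ := fun t => (Finset.Ico (0:ℤ) E).filter (fun j => t + j ∈ C) with hf
  obtain ⟨t₁, ht₁, t₂, ht₂, hne, hfeq⟩ :
      ∃ x ∈ Finset.Icc (0:ℤ) (2 ^ E.toNat), ∃ y ∈ Finset.Icc (0:ℤ) (2 ^ E.toNat),
        x ≠ y ∧ f x = f y := by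
    apply Finset.exists_ne_map_eq_of_card_lt_of_maps_to
      (t := (Finset.Ico (0:ℤ) E).powerset)
    · rw [Finset.card_powerset, Int.card_Ico, Int.card_Icc, sub_zero, sub_zero]
      have hcast : ((2:ℤ) ^ E.toNat + 1) = ((2 ^ E.toNat + 1 : ℕ) : ℤ) := by push_cast; ring
      rw [hcast, Int.toNat_natCast]
      omega
    · intro a _
      exact Finset.mem_powerset.2 (Finset.filter_subset _ _)
  -- WLOG t₁ < t₂
  wlog hlt : t₁ < t₂ generalizing t₁ t₂
  · exact this t₂ ht₂ t₁ ht₁ hne.symm hfeq.symm (by omega)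
  set p := t₂ - t₁ with hp
  have hp0 : 0 < p := by omega
  -- window equality
  have hwin0 : ∀ j : ℤ, 0 ≤ j → j < E → (t₁ + j ∈ C ↔ t₂ + j ∈ C) := by
    intro j hj0 hjE
    have hj : j ∈ Finset.Ico (0:ℤ) E := Finset.mem_Ico.2 ⟨hj0, hjE⟩
    constructor
    · intro hmem
      have : j ∈ f t₁ := Finset.mem_filter.2 ⟨hj, hmem⟩
      rw [hfeq] at this
      exact (Finset.mem_filter.1 this).2
    · intro hmem
      have : j ∈ f t₂ := Finset.mem_filter.2 ⟨hj, hmem⟩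
      rw [← hfeq] at this
      exact (Finset.mem_filter.1 this).2
  -- step lemmas
  have stepF : ∀ s s' : ℤ, (∀ j : ℤ, 0 ≤ j → j < E → (s + j ∈ C ↔ s' + j ∈ C)) →
      (s + E ∈ C ↔ s' + E ∈ C) := by
    intro s s' hw
    rw [tiling_fwd hA h s, tiling_fwd hA h s']
    constructor <;> intro hno ⟨a, ha, j, hj0, hjE, hjC, haj⟩ <;> apply hno
    · exact ⟨a, ha, j, hj0, hjE, (hw j hj0 hjE).2 hjC, haj⟩
    · exact ⟨a, ha, j, hj0, hjE, (hw j hj0 hjE).1 hjC, haj⟩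
  have stepB : ∀ s s' : ℤ, (∀ j : ℤ, 0 ≤ j → j < E → (s + j ∈ C ↔ s' + j ∈ C)) →
      (s - 1 ∈ C ↔ s' - 1 ∈ C) := by
    intro s s' hw
    rw [tiling_bwd hA h s, tiling_bwd hA h s']
    constructor <;> intro hno ⟨a, ha, j, hj0, hjE, hjC, haj⟩ <;> apply hno
    · exact ⟨a, ha, j, hj0, hjE, (hw j hj0 hjE).2 hjC, haj⟩
    · exact ⟨a, ha, j, hj0, hjE, (hw j hj0 hjE).1 hjC, haj⟩
  -- two-sided induction: windows agree everywhere
  have key : ∀ t : ℤ, ∀ j : ℤ, 0 ≤ j → j < E → (t₁ + t + j ∈ C ↔ t₂ + t + j ∈ C) := by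
    intro t
    induction t using Int.induction_on with
    | zero => simpa using hwin0
    | succ k IH =>
      intro j hj0 hjE
      by_cases hcase : j + 1 < E
      · have := IH (j + 1) (by omega) hcase
        have e1 : t₁ + (↑k + 1) + j = t₁ + ↑k + (j + 1) := by ring
        have e2 : t₂ + (↑k + 1) + j = t₂ + ↑k + (j + 1) := by ring
        rw [e1, e2]; exact this
      · have hj : j = E - 1 := by omega
        have := stepF (t₁ + k) (t₂ + k) (IH)
        have e1 : t₁ + (↑k + 1) + j = t₁ + ↑k + E := by rw [hj]; ring
        have e2 : t₂ + (↑k + 1) + j = t₂ + ↑k + E := by rw [hj]; ring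
        rw [e1, e2]; exact this
    | pred k IH =>
      intro j hj0 hjE
      by_cases hcase : 1 ≤ j
      · have := IH (j - 1) (by omega) (by omega)
        have e1 : t₁ + (-↑k - 1) + j = t₁ + (-↑k) + (j - 1) := by ring
        have e2 : t₂ + (-↑k - 1) + j = t₂ + (-↑k) + (j - 1) := by ring
        rw [e1, e2]; exact this
      · have hj : j = 0 := by omega
        have := stepB (t₁ + (-↑k)) (t₂ + (-↑k)) (IH)
        have e1 : t₁ + (-↑k - 1) + j = t₁ + (-↑k) - 1 := by rw [hj]; ring
        have e2 : t₂ + (-↑k - 1) + j = t₂ + (-↑k) - 1 := by rw [hj]; ring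
        rw [e1, e2]; exact this
  -- periodicity
  have hper : ∀ x : ℤ, x ∈ C ↔ x + p ∈ C := by
    intro x
    have := key (x - t₁) 0 le_rfl (by omega)
    have e1 : t₁ + (x - t₁) + 0 = x := by ring
    have e2 : t₂ + (x - t₁) + 0 = x + p := by rw [hp]; ring
    rwa [e1, e2] at this
  have hperZ : ∀ (x z : ℤ), x ∈ C ↔ x + p * z ∈ C := by
    intro x z
    induction z using Int.induction_on with
    | zero => simp
    | succ k IH =>
      have e : x + p * (↑k + 1) = (x + p * ↑k) + p := by ring
      rw [e, ← hper]
      exact IH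
    | pred k IH =>
      have e : x + p * (-↑k) = (x + p * (-↑k - 1)) + p := by ring
      rw [e, ← hper] at IH
      exact IH
  -- the fundamental domain
  set B : Finset ℤ := (Finset.Ico (0:ℤ) p).filter (fun b => b ∈ C) with hB
  set n := p.toNat with hn
  have hnp : (n : ℤ) = p := Int.toNat_of_nonneg hp0.le
  refine ⟨n, by omega, B, ?_, ?_⟩
  · -- C = B ⊕ nℤ
    ext c
    simp only [Set.mem_setOf_eq]
    constructor
    · intro hc
      refine ⟨c % p, ?_, c / p, ?_⟩
      · refine Finset.mem_filter.2 ⟨Finset.mem_Ico.2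
          ⟨Int.emod_nonneg c hp0.ne', Int.emod_lt_of_pos c hp0⟩, ?_⟩
        have := (hperZ (c % p) (c / p)).symm
        rw [show c % p + p * (c / p) = c from Int.emod_add_mul_ediv c p] at this
        exact this.1 hc
      · rw [hnp]
        have := Int.emod_add_mul_ediv c p
        omega
    · rintro ⟨b, hb, z, rfl⟩
      have hbC : b ∈ C := (Finset.mem_filter.1 hb).2
      rw [hnp]
      exact (hperZ b z).1 hbC
  · -- counting: n = |A| * |B|
    have hcard : (A ×ˢ B).card = (Finset.Ico (0:ℤ) p).card := by
      apply Finset.card_bij (fun q _ => (q.1 + q.2) % p)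
      · intro q hq
        exact Finset.mem_Ico.2 ⟨Int.emod_nonneg _ hp0.ne', Int.emod_lt_of_pos _ hp0⟩
      · rintro ⟨a, b⟩ hab ⟨a', b'⟩ hab' heq
        obtain ⟨haA, hbB⟩ := Finset.mem_product.1 hab
        obtain ⟨haA', hbB'⟩ := Finset.mem_product.1 hab'
        obtain ⟨hbI, hbC⟩ := Finset.mem_filter.1 hbB
        obtain ⟨hbI', hbC'⟩ := Finset.mem_filter.1 hbB'
        obtain ⟨hb0, hbp⟩ := Finset.mem_Ico.1 hbI
        obtain ⟨hb0', hbp'⟩ := Finset.mem_Ico.1 hbI'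
        have hdvd : p ∣ (a + b) - (a' + b') :=
          Int.dvd_of_emod_eq_zero (Int.emod_eq_emod_iff_emod_sub_eq_zero.1 heq)
        obtain ⟨k, hk⟩ := hdvd
        -- a + (b - p*k) = a' + b', both represent a' + b'
        have hcC : b - p * k ∈ C := by
          have := (hperZ b (-k)).1 hbC
          rwa [show b + p * (-k) = b - p * k by ring] at this
        obtain ⟨q, hq, huniq⟩ := h (a' + b')
        have h1 : ((a, b - p * k) : ℤ × ℤ) = q :=
          huniq (a, b - p * k) ⟨haA, hcC, by omega⟩
        have h2 : ((a', b') : ℤ × ℤ) = q :=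
          huniq (a', b') ⟨haA', hbC', rfl⟩
        have hpq := h1.trans h2.symm
        have haa : a = a' := congrArg Prod.fst hpq
        have hbb : b - p * k = b' := congrArg Prod.snd hpq
        have : b = b' := by
          have hd : p ∣ b - b' := ⟨k, by omega⟩
          have := Int.eq_zero_of_abs_lt_dvd hd (by rw [abs_lt]; omega)
          omega
        simp [haa, this]
      · intro r hr
        obtain ⟨hr0, hrp⟩ := Finset.mem_Ico.1 hr
        obtain ⟨⟨a, c⟩, ⟨haA, hcC, hsum⟩, -⟩ := h r
        have hbC : c % p ∈ C := by
          have := (hperZ (c % p) (c / p)).symm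
          rw [show c % p + p * (c / p) = c from Int.emod_add_mul_ediv c p] at this
          exact this.1 hcC
        refine ⟨(a, c % p), Finset.mem_product.2 ⟨haA, Finset.mem_filter.2
          ⟨Finset.mem_Ico.2 ⟨Int.emod_nonneg c hp0.ne', Int.emod_lt_of_pos c hp0⟩, hbC⟩⟩, ?_⟩
        simp only
        have hx : a + c % p = r - p * (c / p) := by
          have := Int.emod_add_mul_ediv c p
          omega
        rw [hx, show r - p * (c / p) = r + p * (-(c / p)) by ring,
          Int.add_mul_emod_self_left, Int.emod_eq_of_lt hr0 hrp]
    rw [Finset.card_product, Int.card_Ico] at hcard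
    omega
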